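/- Let k ≥ 2 and N ≥ 0 be integers. For every complex number z with Re z > 0 and |z| < 2π/k, one has (−1)^N · ( Σ_{n=1}^∞ n^N·e^{−nz} − k^{N+1} · Σ_{n=1}^∞ n^N·e^{−knz} ) = Σ_{m=0}^∞ (1 − k^{m+N+1})·B_{N+m+1} / ((N+m+1)·m!) · z^m, with the right-hand series converging absolutely. -/

import Mathlib

open Real Complex

lemma zeta_le_two {j : ℕ} (hj : j ≠ 0) :
    ∑' n : ℕ, 1 / (n : ℝ) ^ (2 * j) ≤ 2 := by
  have h2 := hasSum_zeta_two
  have hs : Summable fun n : ℕ => 1 / (n : ℝ) ^ (2 * j) := (hasSum_zeta_nat hj).summable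
  have hle : ∀ n : ℕ, 1 / (n : ℝ) ^ (2 * j) ≤ 1 / (n : ℝ) ^ 2 := by
    intro n
    rcases Nat.eq_zero_or_pos n with rfl | hn
    · simp only [Nat.cast_zero, zero_pow (by omega : 2*j ≠ 0), zero_pow (two_ne_zero)]
      exact le_rfl
    · apply one_div_le_one_div_of_le
      · positivity
      · exact pow_le_pow_right₀ (by exact_mod_cast hn) (by omega)
  calc ∑' n : ℕ, 1 / (n : ℝ) ^ (2 * j) ≤ ∑' n : ℕ, 1 / (n : ℝ) ^ 2 :=
        Summable.tsum_le_tsum hle hs h2.summable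
    _ = π ^ 2 / 6 := h2.tsum_eq
    _ ≤ 2 := by nlinarith [Real.pi_lt_d2, Real.pi_gt_three]

lemma bern_bound (n : ℕ) : |(bernoulli n : ℝ)| ≤ 4 * n.factorial / (2 * π) ^ n := by
  have hpi := Real.pi_gt_three
  rcases n with _ | _ | n
  · simp
  · rw [bernoulli_one]
    push_cast
    rw [abs_of_nonpos (by norm_num), pow_one, le_div_iff₀ (by positivity)]
    norm_num [Nat.factorial]
    nlinarith [Real.pi_lt_d2]
  · rcases Nat.even_or_odd (n + 2) with he | ho
    · obtain ⟨j, hjj⟩ := he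
      have hj0 : j ≠ 0 := by omega
      have hn : n + 2 = 2 * j := by omega
      rw [hn]
      have H := (hasSum_zeta_nat hj0).tsum_eq
      set Z := ∑' n : ℕ, 1 / (n : ℝ) ^ (2 * j) with hZ
      have hz_nonneg : (0:ℝ) ≤ Z := tsum_nonneg fun n => by positivity
      have hz2 := zeta_le_two hj0
      rw [← hZ] at hz2
      have hfac : (0:ℝ) < (2*j).factorial := by exact_mod_cast (2*j).factorial_pos
      have hden : (0:ℝ) < (2:ℝ)^(2*j-1) * π^(2*j) := by positivity
      have hsq : ((-1:ℝ)^(j+1)) * ((-1:ℝ)^(j+1)) = 1 := by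
        rw [← pow_add]; exact Even.neg_one_pow ⟨j+1, by ring⟩
      have H2 : Z * (2*j).factorial = (-1:ℝ)^(j+1) * 2^(2*j-1) * π^(2*j) * (bernoulli (2*j) : ℝ) := by
        rw [H]; field_simp
      have hB' : (bernoulli (2*j) : ℝ) * (2^(2*j-1) * π^(2*j)) = (-1:ℝ)^(j+1) * Z * (2*j).factorial := by
        linear_combination (-((-1:ℝ)^(j+1))) * H2 - (2^(2*j-1) * π^(2*j) * (bernoulli (2*j):ℝ)) * hsq
      have habs : |(bernoulli (2*j):ℝ)| * (2^(2*j-1)*π^(2*j)) = Z * (2*j).factorial :=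
        calc |(bernoulli (2*j):ℝ)| * (2^(2*j-1)*π^(2*j))
            = |(bernoulli (2*j):ℝ)| * |2^(2*j-1)*π^(2*j)| := by rw [_root_.abs_of_nonneg hden.le]
          _ = |(bernoulli (2*j):ℝ) * (2^(2*j-1)*π^(2*j))| := (abs_mul _ _).symm
          _ = |(-1:ℝ)^(j+1) * Z * (2*j).factorial| := by rw [hB']
          _ = |(-1:ℝ)^(j+1)| * |Z * (2*j).factorial| := by rw [mul_assoc, abs_mul]
          _ = Z * (2*j).factorial := by
              rw [_root_.abs_pow, abs_neg, abs_one, one_pow, one_mul,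
                _root_.abs_of_nonneg (mul_nonneg hz_nonneg hfac.le)]
      have hBval : |(bernoulli (2*j):ℝ)| = Z * (2*j).factorial / (2^(2*j-1)*π^(2*j)) := by
        rw [eq_div_iff hden.ne']; exact habs
      have hexp : (2:ℝ)^(2*j) = 2 * 2^(2*j-1) := by
        conv_lhs => rw [show 2*j = (2*j-1)+1 from by omega]
        rw [pow_succ]; ring
      have h2pow : (2*π)^(2*j) = 2 * (2^(2*j-1) * π^(2*j)) := by
        rw [mul_pow, hexp]; ring
      rw [hBval, h2pow, div_le_div_iff₀ hden (by positivity)]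
      have key : Z * ((2*j).factorial : ℝ) ≤ 2 * (2*j).factorial :=
        mul_le_mul_of_nonneg_right hz2 hfac.le
      nlinarith [mul_le_mul_of_nonneg_left key hden.le]
    · have h1 : 1 < n + 2 := by omega
      rw [bernoulli_eq_bernoulli'_of_ne_one (by omega), bernoulli'_eq_zero_of_odd ho h1]
      simp only [Rat.cast_zero, abs_zero]
      positivity

noncomputable def cc (k N m : ℕ) : ℂ :=
  (1 - (k : ℂ) ^ (m + N + 1)) * ((bernoulli (N + m + 1) : ℚ) : ℂ) /
    (((N + m + 1 : ℕ) : ℂ) * ((Nat.factorial m : ℕ) : ℂ))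

lemma fact_ratio (N m : ℕ) : ((N + m).factorial : ℝ) ≤ ((N:ℝ) + m)^N * m.factorial := by
  induction N with
  | zero => simp
  | succ n ih =>
      have h1 : ((n + 1 + m).factorial : ℝ) = ((n:ℝ) + 1 + m) * (n + m).factorial := by
        rw [show n + 1 + m = (n + m) + 1 from by omega, Nat.factorial_succ]
        push_cast; ring
      rw [h1]
      have hb : ((n:ℝ) + m) ^ n ≤ ((n:ℝ) + 1 + m) ^ n := by
        apply pow_le_pow_left₀ (by positivity); linarith
      calc ((n:ℝ) + 1 + m) * (n + m).factorial
          ≤ ((n:ℝ) + 1 + m) * (((n:ℝ) + m)^n * m.factorial) := by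
            apply mul_le_mul_of_nonneg_left ih (by positivity)
        _ ≤ ((n:ℝ) + 1 + m) * (((n:ℝ) + 1 + m)^n * m.factorial) := by
            apply mul_le_mul_of_nonneg_left
              (mul_le_mul_of_nonneg_right hb (by positivity)) (by positivity)
        _ = ((n:ℝ) + 1 + m) ^ (n+1) * m.factorial := by rw [pow_succ]; ring
        _ = (((n+1:ℕ):ℝ) + m) ^ (n+1) * m.factorial := by push_cast; ring

lemma norm_cc_le (k N m : ℕ) (hk : 1 ≤ k) :
    ‖cc k N m‖ ≤ 8 * ((m:ℝ) + N)^N * ((k:ℝ)/(2*π))^(N+1) * ((k:ℝ)/(2*π))^m := by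
  have hpi := Real.pi_gt_three
  have hfacm : (0:ℝ) < m.factorial := by exact_mod_cast m.factorial_pos
  have hnum : ‖(1 - (k : ℂ) ^ (m + N + 1))‖ ≤ 2 * (k:ℝ)^(m+N+1) := by
    calc ‖(1 - (k : ℂ) ^ (m + N + 1))‖ ≤ ‖(1:ℂ)‖ + ‖(k : ℂ) ^ (m + N + 1)‖ := norm_sub_le _ _
      _ = 1 + (k:ℝ)^(m+N+1) := by
          rw [norm_one, norm_pow]
          norm_num [Complex.norm_natCast]
      _ ≤ 2 * (k:ℝ)^(m+N+1) := by
          have : (1:ℝ) ≤ (k:ℝ)^(m+N+1) := one_le_pow₀ (by exact_mod_cast hk)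
          linarith
  have hB : ‖((bernoulli (N + m + 1) : ℚ) : ℂ)‖ ≤ 4 * (N+m+1).factorial / (2 * π) ^ (N+m+1) := by
    rw [show ((bernoulli (N + m + 1) : ℚ) : ℂ) = ((bernoulli (N + m + 1) : ℝ) : ℂ) by push_cast; ring]
    rw [Complex.norm_real, Real.norm_eq_abs]
    exact bern_bound _
  have hden : ‖(((N + m + 1 : ℕ) : ℂ) * ((Nat.factorial m : ℕ) : ℂ))‖
      = ((N:ℝ) + m + 1) * m.factorial := by
    rw [norm_mul, Complex.norm_natCast, Complex.norm_natCast]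
    push_cast; ring
  rw [cc, norm_div, norm_mul, hden]
  have hdpos : (0:ℝ) < ((N:ℝ) + m + 1) * m.factorial := by positivity
  rw [div_le_iff₀ hdpos]
  have hfr : ((N+m+1).factorial : ℝ) ≤ ((N:ℝ)+m+1) * (((N:ℝ) + m)^N * m.factorial) := by
    have h1 : ((N+m+1).factorial : ℝ) = ((N:ℝ)+m+1) * (N+m).factorial := by
      rw [Nat.factorial_succ]; push_cast; ring
    rw [h1]
    exact mul_le_mul_of_nonneg_left (fact_ratio N m) (by positivity)
  have h2pi : (0:ℝ) < 2*π := by positivity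
  calc ‖(1 - (k : ℂ) ^ (m + N + 1))‖ * ‖((bernoulli (N + m + 1) : ℚ) : ℂ)‖
      ≤ (2 * (k:ℝ)^(m+N+1)) * (4 * (N+m+1).factorial / (2 * π) ^ (N+m+1)) := by
        apply mul_le_mul hnum hB (norm_nonneg _) (by positivity)
    _ ≤ (2 * (k:ℝ)^(m+N+1)) * (4 * (((N:ℝ)+m+1) * (((N:ℝ) + m)^N * m.factorial)) / (2 * π) ^ (N+m+1)) := by
        apply mul_le_mul_of_nonneg_left _ (by positivity)
        apply div_le_div_of_nonneg_right _ (by positivity)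
        · linarith
    _ = 8 * ((m:ℝ) + N)^N * (((k:ℝ)/(2*π))^(N+1) * ((k:ℝ)/(2*π))^m) * (((N:ℝ) + m + 1) * m.factorial) := by
        rw [← pow_add, div_pow, show N + 1 + m = m + N + 1 from by omega]
        have hknn : (0:ℝ) ≤ k := Nat.cast_nonneg k
        field_simp
        ring
    _ = 8 * ((m:ℝ) + N)^N * ((k:ℝ)/(2*π))^(N+1) * ((k:ℝ)/(2*π))^m * (((N:ℝ) + m + 1) * m.factorial) := by
        ring

lemma master (p : ℕ) {q : ℝ} (h0 : 0 ≤ q) (h1 : q < 1) :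
    Summable (fun m : ℕ => ((m:ℝ) + p)^p * q^m) := by
  rcases eq_or_lt_of_le h0 with rfl | hq
  · apply (summable_nat_add_iff 1).1
    exact summable_zero.congr fun m => by simp [zero_pow (Nat.succ_ne_zero m)]
  · have h := summable_pow_mul_geometric_of_norm_lt_one (R := ℝ) p
      (r := q) (by rwa [Real.norm_eq_abs, _root_.abs_of_nonneg h0])
    have h2 := (summable_nat_add_iff p).2 h
    have h3 := h2.mul_left ((q^p)⁻¹)
    apply h3.congr
    intro m
    push_cast
    field_simp
    ring
lemma summable_main (k N : ℕ) (hk : 1 ≤ k) {r : ℝ} (h0 : 0 ≤ r) (hr : r < 2*π/k) :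
    Summable (fun m : ℕ => ((m:ℝ)+1) * ‖cc k N m‖ * r^m) := by
  have hpi : (0:ℝ) < 2*π := by positivity
  have hkp : (0:ℝ) < k := by exact_mod_cast hk
  set q : ℝ := (k:ℝ)/(2*π) * r with hq
  have hq0 : 0 ≤ q := by positivity
  have hq1 : q < 1 := by
    rw [hq, div_mul_eq_mul_div, div_lt_one hpi, mul_comm]
    rw [lt_div_iff₀ hkp] at hr
    linarith
  have hM := (master (N+1) hq0 hq1).mul_left (8 * ((k:ℝ)/(2*π))^(N+1))
  apply Summable.of_nonneg_of_le _ _ hM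
  · intro m
    positivity
  · intro m
    have h1 : ((m:ℝ)+1) * ‖cc k N m‖ * r^m
        ≤ ((m:ℝ)+1) * (8 * ((m:ℝ) + N)^N * ((k:ℝ)/(2*π))^(N+1) * ((k:ℝ)/(2*π))^m) * r^m := by
      apply mul_le_mul_of_nonneg_right _ (by positivity)
      exact mul_le_mul_of_nonneg_left (norm_cc_le k N m hk) (by positivity)
    apply h1.trans
    have hqm : ((k:ℝ)/(2*π))^m * r^m = q^m := by rw [← mul_pow]
    have h2 : ((m:ℝ)+1) * ((m:ℝ) + N)^N ≤ ((m:ℝ) + (N+1))^(N+1) := by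
      have ha : ((m:ℝ)+1) ≤ ((m:ℝ) + (N+1)) := by push_cast; linarith [Nat.cast_nonneg (α := ℝ) N]
      have hb : ((m:ℝ) + N)^N ≤ ((m:ℝ) + (N+1))^N := by
        apply pow_le_pow_left₀ (by positivity); push_cast; linarith
      calc ((m:ℝ)+1) * ((m:ℝ) + N)^N ≤ ((m:ℝ) + (N+1)) * ((m:ℝ) + (N+1))^N := by
            apply mul_le_mul ha hb (by positivity) (by positivity)
        _ = ((m:ℝ) + (N+1))^(N+1) := by rw [pow_succ]; ring
    calc ((m:ℝ)+1) * (8 * ((m:ℝ) + N)^N * ((k:ℝ)/(2*π))^(N+1) * ((k:ℝ)/(2*π))^m) * r^m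
        = 8 * ((k:ℝ)/(2*π))^(N+1) * (((m:ℝ)+1) * ((m:ℝ) + N)^N) * (((k:ℝ)/(2*π))^m * r^m) := by
          ring
      _ = 8 * ((k:ℝ)/(2*π))^(N+1) * (((m:ℝ)+1) * ((m:ℝ) + N)^N) * q^m := by rw [hqm]
      _ ≤ 8 * ((k:ℝ)/(2*π))^(N+1) * (((m:ℝ) + (N+1))^(N+1)) * q^m := by
          apply mul_le_mul_of_nonneg_right _ (by positivity)
          exact mul_le_mul_of_nonneg_left h2 (by positivity)
      _ = 8 * ((k:ℝ)/(2*π))^(N+1) * (((m:ℝ) + ((N+1:ℕ):ℝ))^(N+1) * q^m) := by push_cast; ring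

lemma summable_cc_norm (k N : ℕ) (hk : 1 ≤ k) {z : ℂ} (hz : ‖z‖ < 2*π/k) :
    Summable (fun m : ℕ => ‖cc k N m * z^m‖) := by
  apply Summable.of_nonneg_of_le (fun m => norm_nonneg _) _
    (summable_main k N hk (norm_nonneg z) hz)
  intro m
  rw [norm_mul, norm_pow]
  have : ‖cc k N m‖ * ‖z‖^m ≤ ((m:ℝ)+1) * ‖cc k N m‖ * ‖z‖^m := by
    apply mul_le_mul_of_nonneg_right _ (by positivity)
    nlinarith [norm_nonneg (cc k N m), Nat.cast_nonneg (α := ℝ) m]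
  exact this
noncomputable def SS (j : ℕ) (z : ℂ) : ℂ :=
  ∑' n : ℕ, ((n : ℂ) + 1) ^ j * Complex.exp (-((n : ℂ) + 1) * z)

lemma norm_term (j n : ℕ) (w : ℂ) :
    ‖((n:ℂ)+1)^j * Complex.exp (-((n:ℂ)+1)*w)‖
      = ((n:ℝ)+1)^j * Real.exp (-w.re) ^ (n+1) := by
  rw [norm_mul, norm_pow, Complex.norm_exp]
  congr 1
  · congr 1
    rw [show ((n:ℂ)+1) = ((n+1:ℕ):ℂ) by push_cast; ring, Complex.norm_natCast]
    push_cast; ring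
  · rw [← Real.exp_nat_mul]
    congr 1
    have h : (-((n:ℂ)+1)*w).re = -(((n:ℝ)+1) * w.re) := by
      simp [Complex.mul_re]
      ring
    rw [h]; push_cast; ring

lemma summable_SS_aux (j : ℕ) {c : ℝ} (hc : 0 < c) :
    Summable (fun n : ℕ => ((n:ℝ)+1)^j * Real.exp (-c) ^ (n+1)) := by
  have hρ : Real.exp (-c) < 1 := Real.exp_lt_one_iff.2 (by linarith)
  have hρ0 : 0 ≤ Real.exp (-c) := (Real.exp_pos _).le
  have h := summable_pow_mul_geometric_of_norm_lt_one (R := ℝ) j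
    (r := Real.exp (-c)) (by rwa [Real.norm_eq_abs, _root_.abs_of_nonneg hρ0])
  have h2 := (summable_nat_add_iff 1).2 h
  apply h2.congr
  intro n
  push_cast
  ring

lemma summable_SS_norm (j : ℕ) {z : ℂ} (hz : 0 < z.re) :
    Summable (fun n : ℕ => ‖((n:ℂ)+1)^j * Complex.exp (-((n:ℂ)+1)*z)‖) := by
  apply (summable_SS_aux j (by linarith : (0:ℝ) < z.re)).congr
  intro n
  rw [norm_term]

lemma exp_ne_one {z : ℂ} (hz : 0 < z.re) : Complex.exp z ≠ 1 := by
  intro h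
  have h2 := congrArg norm h
  rw [Complex.norm_exp, norm_one] at h2
  have h3 : (1:ℝ) < Real.exp z.re := by
    rw [show (1:ℝ) = Real.exp 0 from (Real.exp_zero).symm]
    exact Real.exp_lt_exp.2 hz
  rw [h2] at h3
  exact lt_irrefl _ h3

lemma SS_zero {z : ℂ} (hz : 0 < z.re) : SS 0 z = 1 / (Complex.exp z - 1) := by
  have hnorm : ‖Complex.exp (-z)‖ < 1 := by
    rw [Complex.norm_exp, Complex.neg_re]
    exact Real.exp_lt_one_iff.2 (by linarith)
  have hterm : ∀ n : ℕ, ((n:ℂ)+1)^0 * Complex.exp (-((n:ℂ)+1)*z)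
      = Complex.exp (-z) * Complex.exp (-z) ^ n := by
    intro n
    rw [pow_zero, one_mul, ← pow_succ', ← Complex.exp_nat_mul]
    congr 1
    push_cast
    ring
  rw [SS, tsum_congr hterm, tsum_mul_left, tsum_geometric_of_norm_lt_one hnorm]
  have he : Complex.exp z ≠ 0 := Complex.exp_ne_zero z
  have h1 : Complex.exp z - 1 ≠ 0 := sub_ne_zero.2 (exp_ne_one hz)
  have h2 : 1 - Complex.exp (-z) ≠ 0 := by
    intro h
    have : Complex.exp (-z) = 1 := by linear_combination -h
    rw [this] at hnorm
    simp at hnorm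
  rw [Complex.exp_neg] at *
  field_simp
lemma hasDerivAt_SS (j : ℕ) {z : ℂ} (hz : 0 < z.re) :
    HasDerivAt (SS j) (-(SS (j+1) z)) z := by
  have key : HasDerivAt (fun w => ∑' n : ℕ, ((n : ℂ) + 1) ^ j * Complex.exp (-((n : ℂ) + 1) * w))
      (∑' n : ℕ, -(((n : ℂ) + 1) ^ (j+1) * Complex.exp (-((n : ℂ) + 1) * z))) z := by
    refine hasDerivAt_tsum_of_isPreconnected
      (u := fun n : ℕ => ((n:ℝ)+1)^(j+1) * Real.exp (-(z.re/2)) ^ (n+1))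
      (t := {w : ℂ | z.re/2 < w.re}) (y₀ := z)
      (g := fun (n : ℕ) (w : ℂ) => ((n : ℂ) + 1) ^ j * Complex.exp (-((n : ℂ) + 1) * w))
      (g' := fun (n : ℕ) (w : ℂ) => -(((n : ℂ) + 1) ^ (j+1) * Complex.exp (-((n : ℂ) + 1) * w)))
      ?_ ?_ ?_ ?_ ?_ ?_ ?_ ?_
    · exact summable_SS_aux (j+1) (by linarith)
    · exact isOpen_lt continuous_const Complex.continuous_re
    · exact (convex_halfSpace_re_gt (z.re/2)).isPreconnected
    · intro n w _
      have h1 : HasDerivAt (fun w : ℂ => -((n:ℂ)+1) * w) (-((n:ℂ)+1)) w := by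
        simpa using (hasDerivAt_id w).const_mul (-((n:ℂ)+1))
      have h2 := h1.cexp
      have h3 := h2.const_mul (((n:ℂ)+1)^j)
      convert h3 using 1
      show -(((n : ℂ) + 1) ^ (j+1) * Complex.exp (-((n : ℂ) + 1) * w)) = _
      rw [pow_succ]
      ring
      rfl
    · intro n w hw
      rw [norm_neg, norm_term]
      apply mul_le_mul_of_nonneg_left _ (by positivity)
      apply pow_le_pow_left₀ (Real.exp_pos _).le
      exact Real.exp_le_exp.2 (by simpa using le_of_lt hw)
    · simpa using hz
    · exact (summable_SS_norm j hz).of_norm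
    · simpa using hz
  have heq : (∑' n : ℕ, -(((n : ℂ) + 1) ^ (j+1) * Complex.exp (-((n : ℂ) + 1) * z)))
      = -(SS (j+1) z) := by
    rw [SS, ← tsum_neg]
  rw [heq] at key
  exact key
open PowerSeries in
lemma eval_mul (P Q : PowerSeries ℂ) (z : ℂ)
    (hP : Summable fun n : ℕ => ‖(PowerSeries.coeff n P) * z^n‖)
    (hQ : Summable fun n : ℕ => ‖(PowerSeries.coeff n Q) * z^n‖) :
    (Summable fun n : ℕ => ‖(PowerSeries.coeff n (P*Q)) * z^n‖) ∧
    (∑' n : ℕ, (PowerSeries.coeff n (P*Q)) * z^n)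
      = (∑' n : ℕ, (PowerSeries.coeff n P) * z^n) * (∑' n : ℕ, (PowerSeries.coeff n Q) * z^n) := by
  have key : ∀ n : ℕ, ∑ kl ∈ Finset.HasAntidiagonal.antidiagonal n,
      ((PowerSeries.coeff kl.1 P) * z^kl.1) * ((PowerSeries.coeff kl.2 Q) * z^kl.2)
      = (PowerSeries.coeff n (P*Q)) * z^n := by
    intro n
    rw [PowerSeries.coeff_mul, Finset.sum_mul]
    apply Finset.sum_congr rfl
    intro p hp
    have hmem := Finset.HasAntidiagonal.mem_antidiagonal.1 hp
    rw [← hmem, pow_add]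
    ring
  constructor
  · have h := summable_norm_sum_mul_antidiagonal_of_summable_norm hP hQ
    apply h.congr
    intro n
    rw [key n]
  · rw [tsum_mul_tsum_eq_tsum_sum_antidiagonal_of_summable_norm hP hQ]
    exact (tsum_congr key).symm
noncomputable def GG (k : ℕ) : PowerSeries ℂ := PowerSeries.mk fun m => cc k 0 m

open PowerSeries in
lemma XG (k : ℕ) : (PowerSeries.X : PowerSeries ℂ) * GG k
    = bernoulliPowerSeries ℂ - rescale (k:ℂ) (bernoulliPowerSeries ℂ) := by
  ext n
  rcases n with _ | m
  · rw [PowerSeries.coeff_zero_X_mul, map_sub, coeff_rescale, pow_zero, one_mul, sub_self]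
  · rw [PowerSeries.coeff_succ_X_mul, map_sub, coeff_rescale, bernoulliPowerSeries, coeff_mk, GG, coeff_mk, cc]
    rw [eq_ratCast (algebraMap ℚ ℂ)]
    push_cast
    have hfac : ((m+1).factorial : ℂ) = ((m:ℂ)+1) * (m.factorial : ℂ) := by
      rw [Nat.factorial_succ]; push_cast; ring
    have h1 : ((m.factorial : ℂ)) ≠ 0 := by exact_mod_cast m.factorial_ne_zero
    have h2 : ((m:ℂ)+1) ≠ 0 := by exact_mod_cast Nat.succ_ne_zero m
    rw [hfac]
    field_simp
    ring

open PowerSeries in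
lemma FI (k : ℕ) : GG k * (PowerSeries.exp ℂ - 1) * (rescale (k:ℂ) (PowerSeries.exp ℂ) - 1)
    = (rescale (k:ℂ) (PowerSeries.exp ℂ) - 1) - PowerSeries.C (k:ℂ) * (PowerSeries.exp ℂ - 1) := by
  have hB := bernoulliPowerSeries_mul_exp_sub_one ℂ
  have hBk : rescale (k:ℂ) (bernoulliPowerSeries ℂ) * (rescale (k:ℂ) (PowerSeries.exp ℂ) - 1)
      = PowerSeries.C (k:ℂ) * PowerSeries.X := by
    have h := congrArg (rescale (k:ℂ)) hB
    rw [map_mul, map_sub, map_one, rescale_X] at h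
    exact h
  have hXG := XG k
  apply mul_left_cancel₀ (PowerSeries.X_ne_zero : (PowerSeries.X : PowerSeries ℂ) ≠ 0)
  linear_combination ((PowerSeries.exp ℂ - 1) * (rescale (k:ℂ) (PowerSeries.exp ℂ) - 1)) * hXG
    + (rescale (k:ℂ) (PowerSeries.exp ℂ) - 1) * hB
    - (PowerSeries.exp ℂ - 1) * hBk

lemma eval_exp (w : ℂ) :
    (Summable fun n : ℕ => ‖(PowerSeries.coeff n (PowerSeries.exp ℂ - 1)) * w^n‖) ∧
    HasSum (fun n : ℕ => (PowerSeries.coeff n (PowerSeries.exp ℂ - 1)) * w^n)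
      (Complex.exp w - 1) := by
  have hcoeff : ∀ n : ℕ, (PowerSeries.coeff n (PowerSeries.exp ℂ - 1)) * w^n
      = w^n / n.factorial - (if n = 0 then 1 else 0) := by
    intro n
    rw [map_sub, PowerSeries.coeff_exp, PowerSeries.coeff_one, eq_ratCast (algebraMap ℚ ℂ)]
    rcases n with _ | n
    · simp
    · simp only [Nat.succ_ne_zero, if_false]
      push_cast
      ring
  have h1 : HasSum (fun n : ℕ => w^n / n.factorial) (Complex.exp w) := by
    rw [Complex.exp_eq_exp_ℂ]
    exact NormedSpace.expSeries_div_hasSum_exp w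
  have h2 : HasSum (fun n : ℕ => if n = 0 then (1:ℂ) else 0) 1 := hasSum_ite_eq 0 1
  constructor
  · have hs1 : Summable fun n : ℕ => ‖w‖^n / n.factorial := Real.summable_pow_div_factorial ‖w‖
    have hs2 : Summable fun n : ℕ => (if n = 0 then (1:ℝ) else 0) :=
      summable_of_finite_support (by
        apply Set.Finite.subset (Set.finite_singleton 0)
        intro n hn
        simp only [Function.mem_support] at hn
        by_contra h
        exact hn (if_neg h))
    apply Summable.of_nonneg_of_le (fun n => norm_nonneg _) _ (hs1.add hs2)
    intro n
    rw [hcoeff n]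
    refine (norm_sub_le _ _).trans (le_of_eq ?_)
    rw [norm_div, norm_pow, Complex.norm_natCast]
    congr 1
    split <;> simp
  · have hfe : (fun n : ℕ => (PowerSeries.coeff n (PowerSeries.exp ℂ - 1)) * w^n)
        = fun n : ℕ => w^n / n.factorial - (if n = 0 then 1 else 0) := funext hcoeff
    rw [hfe]
    exact h1.sub h2
lemma re_k_mul (k : ℕ) (z : ℂ) : ((k:ℂ)*z).re = (k:ℝ) * z.re := by
  simp [Complex.mul_re]

open PowerSeries in
lemma base (k : ℕ) (hk : 2 ≤ k) {z : ℂ} (hz : 0 < z.re) (hz2 : ‖z‖ < 2*π/k) :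
    SS 0 z - (k:ℂ) * SS 0 ((k:ℂ)*z) = ∑' m : ℕ, cc k 0 m * z^m := by
  have hk1 : 1 ≤ k := by omega
  have hkpos : (0:ℝ) < k := by exact_mod_cast (by omega : 0 < k)
  have hkz : 0 < ((k:ℂ)*z).re := by rw [re_k_mul]; positivity
  have hEk_coeff : ∀ n : ℕ, (coeff n (rescale (k:ℂ) (PowerSeries.exp ℂ) - 1)) * z^n
      = (coeff n (PowerSeries.exp ℂ - 1)) * ((k:ℂ)*z)^n := by
    intro n
    rw [map_sub, map_sub, coeff_rescale, mul_pow]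
    rcases n with _ | n
    · simp
    · rw [coeff_one, if_neg (Nat.succ_ne_zero n)]
      ring
  have hEkSum : Summable fun n : ℕ => ‖(coeff n (rescale (k:ℂ) (PowerSeries.exp ℂ) - 1)) * z^n‖ := by
    apply ((eval_exp ((k:ℂ)*z)).1).congr
    intro n
    rw [hEk_coeff n]
  have hEkHasSum : HasSum (fun n : ℕ => (coeff n (rescale (k:ℂ) (PowerSeries.exp ℂ) - 1)) * z^n)
      (Complex.exp ((k:ℂ)*z) - 1) := by
    rw [funext hEk_coeff]
    exact (eval_exp ((k:ℂ)*z)).2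
  have hGsum : Summable fun m : ℕ => ‖(coeff m (GG k)) * z^m‖ := by
    apply (summable_cc_norm k 0 hk1 hz2).congr
    intro m
    rw [GG, coeff_mk]
  have hGval : (∑' m : ℕ, (coeff m (GG k)) * z^m) = ∑' m : ℕ, cc k 0 m * z^m := by
    apply tsum_congr
    intro m
    rw [GG, coeff_mk]
  have hE1 := eval_exp z
  have hm1 := eval_mul (GG k) (PowerSeries.exp ℂ - 1) z hGsum hE1.1
  have hm2 := eval_mul (GG k * (PowerSeries.exp ℂ - 1)) (rescale (k:ℂ) (PowerSeries.exp ℂ) - 1) z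
    hm1.1 hEkSum
  have hCk : HasSum (fun n : ℕ => (coeff n (PowerSeries.C (k:ℂ) * (PowerSeries.exp ℂ - 1))) * z^n)
      ((k:ℂ) * (Complex.exp z - 1)) := by
    have h := hE1.2.mul_left (k:ℂ)
    have hfe : (fun n : ℕ => (coeff n (PowerSeries.C (k:ℂ) * (PowerSeries.exp ℂ - 1))) * z^n)
        = fun n : ℕ => (k:ℂ) * ((coeff n (PowerSeries.exp ℂ - 1)) * z^n) := by
      funext n
      rw [PowerSeries.coeff_C_mul]
      ring
    rw [hfe]
    exact h
  have hRHS : HasSum (fun n : ℕ =>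
      (coeff n ((rescale (k:ℂ) (PowerSeries.exp ℂ) - 1)
        - PowerSeries.C (k:ℂ) * (PowerSeries.exp ℂ - 1))) * z^n)
      ((Complex.exp ((k:ℂ)*z) - 1) - (k:ℂ) * (Complex.exp z - 1)) := by
    have h := hEkHasSum.sub hCk
    have hfe : (fun n : ℕ =>
        (coeff n ((rescale (k:ℂ) (PowerSeries.exp ℂ) - 1)
          - PowerSeries.C (k:ℂ) * (PowerSeries.exp ℂ - 1))) * z^n)
        = fun n : ℕ => (coeff n (rescale (k:ℂ) (PowerSeries.exp ℂ) - 1)) * z^n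
          - (coeff n (PowerSeries.C (k:ℂ) * (PowerSeries.exp ℂ - 1))) * z^n := by
      funext n
      rw [map_sub, sub_mul]
    rw [hfe]
    exact h
  have hEq : (Complex.exp ((k:ℂ)*z) - 1) - (k:ℂ) * (Complex.exp z - 1)
      = (∑' m : ℕ, cc k 0 m * z^m) * (Complex.exp z - 1) * (Complex.exp ((k:ℂ)*z) - 1) := by
    calc (Complex.exp ((k:ℂ)*z) - 1) - (k:ℂ) * (Complex.exp z - 1)
        = ∑' n : ℕ, (coeff n ((rescale (k:ℂ) (PowerSeries.exp ℂ) - 1)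
            - PowerSeries.C (k:ℂ) * (PowerSeries.exp ℂ - 1))) * z^n := hRHS.tsum_eq.symm
      _ = ∑' n : ℕ, (coeff n (GG k * (PowerSeries.exp ℂ - 1)
            * (rescale (k:ℂ) (PowerSeries.exp ℂ) - 1))) * z^n := by rw [FI k]
      _ = (∑' n : ℕ, (coeff n (GG k * (PowerSeries.exp ℂ - 1))) * z^n)
            * (∑' n : ℕ, (coeff n (rescale (k:ℂ) (PowerSeries.exp ℂ) - 1)) * z^n) := hm2.2
      _ = (∑' m : ℕ, cc k 0 m * z^m) * (Complex.exp z - 1) * (Complex.exp ((k:ℂ)*z) - 1) := by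
          rw [hm1.2, hGval, hE1.2.tsum_eq, hEkHasSum.tsum_eq]
  have hE1ne : Complex.exp z - 1 ≠ 0 := sub_ne_zero.2 (exp_ne_one hz)
  have hEkne : Complex.exp ((k:ℂ)*z) - 1 ≠ 0 := sub_ne_zero.2 (exp_ne_one hkz)
  rw [SS_zero hz, SS_zero hkz]
  field_simp
  linear_combination hEq
noncomputable def gN (k N : ℕ) (z : ℂ) : ℂ := ∑' m : ℕ, cc k N m * z^m

lemma cc_rec (k N m : ℕ) : ((m:ℂ)+1) * cc k N (m+1) = cc k (N+1) m := by
  rw [cc, cc]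
  have e1 : m + 1 + N + 1 = m + (N+1) + 1 := by omega
  have e2 : N + (m+1) + 1 = (N+1) + m + 1 := by omega
  rw [e1, e2, Nat.factorial_succ]
  push_cast
  have hfac : ((m.factorial : ℂ)) ≠ 0 := by exact_mod_cast m.factorial_ne_zero
  have hm1 : ((m:ℂ)+1) ≠ 0 := by exact_mod_cast Nat.succ_ne_zero m
  have hd : ((N:ℂ)+1+(m:ℂ)+1) ≠ 0 := by exact_mod_cast (by omega : N+1+m+1 ≠ 0)
  field_simp

lemma hasDerivAt_gN (k N : ℕ) (hk : 1 ≤ k) {z : ℂ} (hz2 : ‖z‖ < 2*π/k) :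
    HasDerivAt (gN k N) (gN k (N+1) z) z := by
  have hkpos : (0:ℝ) < k := by exact_mod_cast hk
  have hR : 0 < 2*π/k := by positivity
  set r : ℝ := (‖z‖ + 2*π/k)/2 with hr
  have hzr : ‖z‖ < r := by rw [hr]; linarith
  have hrR : r < 2*π/k := by rw [hr]; linarith
  have hr0 : 0 < r := lt_of_le_of_lt (norm_nonneg z) hzr
  have hu : Summable (fun m : ℕ => (m:ℝ) * ‖cc k N m‖ * r^(m-1)) := by
    have h := (summable_main k N hk hr0.le hrR).mul_left (1/r)
    apply Summable.of_nonneg_of_le _ _ h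
    · intro m; positivity
    · intro m
      rcases m with _ | j
      · simp; positivity
      · have : ((j+1:ℕ):ℝ) * ‖cc k N (j+1)‖ * r^((j+1)-1)
            = (1/r) * ((((j+1):ℕ):ℝ) * ‖cc k N (j+1)‖ * r^(j+1)) := by
          rw [Nat.add_sub_cancel, pow_succ]
          field_simp
        rw [this]
        apply mul_le_mul_of_nonneg_left _ (by positivity)
        apply mul_le_mul_of_nonneg_right _ (by positivity)
        apply mul_le_mul_of_nonneg_right _ (norm_nonneg _)
        push_cast
        linarith
  have key : HasDerivAt (fun w => ∑' m : ℕ, cc k N m * w^m)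
      (∑' m : ℕ, cc k N m * ((m:ℂ) * z^(m-1))) z := by
    refine hasDerivAt_tsum_of_isPreconnected
      (u := fun m : ℕ => (m:ℝ) * ‖cc k N m‖ * r^(m-1))
      (t := Metric.ball (0:ℂ) r) (y₀ := z)
      (g := fun (m : ℕ) (w : ℂ) => cc k N m * w^m)
      (g' := fun (m : ℕ) (w : ℂ) => cc k N m * ((m:ℂ) * w^(m-1)))
      hu Metric.isOpen_ball ((convex_ball (0:ℂ) r).isPreconnected)
      ?_ ?_ ?_ ?_ ?_
    · intro m w _
      exact (hasDerivAt_pow m w).const_mul (cc k N m)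
    · intro m w hw
      rw [norm_mul, norm_mul, norm_pow, Complex.norm_natCast]
      rw [Metric.mem_ball, dist_zero_right] at hw
      calc ‖cc k N m‖ * ((m:ℝ) * ‖w‖^(m-1)) ≤ ‖cc k N m‖ * ((m:ℝ) * r^(m-1)) := by
            apply mul_le_mul_of_nonneg_left _ (norm_nonneg _)
            apply mul_le_mul_of_nonneg_left _ (Nat.cast_nonneg m)
            exact pow_le_pow_left₀ (norm_nonneg w) hw.le _
        _ = (m:ℝ) * ‖cc k N m‖ * r^(m-1) := by ring
    · rwa [Metric.mem_ball, dist_zero_right]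
    · exact (summable_cc_norm k N hk hz2).of_norm
    · rwa [Metric.mem_ball, dist_zero_right]
  have hsum' : Summable (fun m : ℕ => cc k N m * ((m:ℂ) * z^(m-1))) := by
    apply Summable.of_norm
    apply Summable.of_nonneg_of_le (fun m => norm_nonneg _) _ hu
    intro m
    rw [norm_mul, norm_mul, norm_pow, Complex.norm_natCast]
    calc ‖cc k N m‖ * ((m:ℝ) * ‖z‖^(m-1)) ≤ ‖cc k N m‖ * ((m:ℝ) * r^(m-1)) := by
          apply mul_le_mul_of_nonneg_left _ (norm_nonneg _)
          apply mul_le_mul_of_nonneg_left _ (Nat.cast_nonneg m)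
          exact pow_le_pow_left₀ (norm_nonneg z) hzr.le _
      _ = (m:ℝ) * ‖cc k N m‖ * r^(m-1) := by ring
  have hre : (∑' m : ℕ, cc k N m * ((m:ℂ) * z^(m-1))) = gN k (N+1) z := by
    rw [Summable.tsum_eq_zero_add hsum']
    simp only [Nat.cast_zero, zero_mul, mul_zero, zero_add]
    rw [gN]
    apply tsum_congr
    intro j
    rw [← cc_rec k N j]
    push_cast
    ring
  rw [hre] at key
  exact key

lemma claim (k : ℕ) (hk : 2 ≤ k) :
    ∀ (N : ℕ) (z : ℂ), 0 < z.re → ‖z‖ < 2*π/k →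
      SS N z - (k:ℂ)^(N+1) * SS N ((k:ℂ)*z) = (-1:ℂ)^N * gN k N z := by
  have hk1 : 1 ≤ k := by omega
  have hkpos : (0:ℝ) < k := by exact_mod_cast (by omega : 0 < k)
  intro N
  induction N with
  | zero =>
      intro z hz hz2
      rw [pow_one, pow_zero, one_mul, gN]
      exact base k hk hz hz2
  | succ N ih =>
      intro z hz hz2
      have hkz : 0 < ((k:ℂ)*z).re := by rw [re_k_mul]; positivity
      -- derivative of LHS function
      have hcomp : HasDerivAt (fun w => SS N ((k:ℂ)*w)) (-(SS (N+1) ((k:ℂ)*z)) * (k:ℂ)) z := by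
        have houter := hasDerivAt_SS N hkz
        have hinner : HasDerivAt (fun w : ℂ => (k:ℂ)*w) (k:ℂ) z := by
          simpa using (hasDerivAt_id z).const_mul (k:ℂ)
        exact HasDerivAt.comp z houter hinner
      have hD1 : HasDerivAt (fun w => SS N w - (k:ℂ)^(N+1) * SS N ((k:ℂ)*w))
          (-(SS (N+1) z) - (k:ℂ)^(N+1) * (-(SS (N+1) ((k:ℂ)*z)) * (k:ℂ))) z :=
        (hasDerivAt_SS N hz).sub (hcomp.const_mul ((k:ℂ)^(N+1)))
      have hD2 : HasDerivAt (fun w => (-1:ℂ)^N * gN k N w) ((-1:ℂ)^N * gN k (N+1) z) z :=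
        (hasDerivAt_gN k N hk1 hz2).const_mul ((-1:ℂ)^N)
      have hU : IsOpen ({w : ℂ | 0 < w.re} ∩ Metric.ball (0:ℂ) (2*π/k)) :=
        (isOpen_lt continuous_const Complex.continuous_re).inter Metric.isOpen_ball
      have hzU : z ∈ ({w : ℂ | 0 < w.re} ∩ Metric.ball (0:ℂ) (2*π/k)) :=
        ⟨hz, by rwa [Metric.mem_ball, dist_zero_right]⟩
      have heq : (fun w => SS N w - (k:ℂ)^(N+1) * SS N ((k:ℂ)*w))
          =ᶠ[nhds z] (fun w => (-1:ℂ)^N * gN k N w) := by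
        filter_upwards [hU.mem_nhds hzU] with w hw
        exact ih w hw.1 (by have := hw.2; rwa [Metric.mem_ball, dist_zero_right] at this)
      have hD2' : HasDerivAt (fun w => SS N w - (k:ℂ)^(N+1) * SS N ((k:ℂ)*w))
          ((-1:ℂ)^N * gN k (N+1) z) z := hD2.congr_of_eventuallyEq heq
      have huniq := hD1.unique hD2'
      linear_combination (-1 : ℂ) * huniq
theorem stmt9 (k N : ℕ) (hk : 2 ≤ k) (z : ℂ) (hz : 0 < z.re)
    (hz2 : ‖z‖ < 2 * π / k) :
    Summable (fun m : ℕ =>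
      ‖(1 - (k : ℂ) ^ (m + N + 1)) * ((bernoulli (N + m + 1) : ℚ) : ℂ) /
          (((N + m + 1 : ℕ) : ℂ) * ((Nat.factorial m : ℕ) : ℂ)) * z ^ m‖) ∧
    (-1 : ℂ) ^ N *
        ((∑' n : ℕ, ((n : ℂ) + 1) ^ N * Complex.exp (-((n : ℂ) + 1) * z)) -
          (k : ℂ) ^ (N + 1) *
            ∑' n : ℕ, ((n : ℂ) + 1) ^ N * Complex.exp (-(k : ℂ) * ((n : ℂ) + 1) * z)) =
      ∑' m : ℕ,
        (1 - (k : ℂ) ^ (m + N + 1)) * ((bernoulli (N + m + 1) : ℚ) : ℂ) /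
          (((N + m + 1 : ℕ) : ℂ) * ((Nat.factorial m : ℕ) : ℂ)) * z ^ m := by
  constructor
  · exact summable_cc_norm k N (by omega) hz2
  · have hT2 : (∑' n : ℕ, ((n : ℂ) + 1) ^ N * Complex.exp (-(k : ℂ) * ((n : ℂ) + 1) * z))
        = SS N ((k:ℂ)*z) :=
      tsum_congr fun n => by
        rw [show -(k:ℂ) * ((n:ℂ)+1) * z = -((n:ℂ)+1) * ((k:ℂ)*z) from by ring]
    have h := claim k hk N z hz hz2
    rw [show (∑' n : ℕ, ((n : ℂ) + 1) ^ N * Complex.exp (-((n : ℂ) + 1) * z)) = SS N z from rfl,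
      hT2, h, ← mul_assoc, ← mul_pow, neg_mul_neg, one_mul, one_pow, one_mul]
    rfl
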